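/- If G is a simple graph with n ≥ 3 vertices and minimum degree δ(G) ≥ n/2, then G is Hamiltonian (Dirac's theorem). -/

import Mathlib

namespace DiracAux

open SimpleGraph Walk

variable {V : Type*} {G : SimpleGraph V}

/-- A walk built from a function on indices with adjacent consecutive values. -/
def walkOfFn (G : SimpleGraph V) (f : ℕ → V) :
    ∀ n : ℕ, (∀ i, i < n → G.Adj (f i) (f (i + 1))) → G.Walk (f 0) (f n)
  | 0, _ => Walk.nil
  | (n + 1), h =>
    Walk.cons (h 0 (Nat.succ_pos n))
      (walkOfFn G (fun i => f (i + 1)) n (fun i hi => h (i + 1) (by omega)))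

lemma length_walkOfFn (f : ℕ → V) :
    ∀ (n : ℕ) (h : ∀ i, i < n → G.Adj (f i) (f (i + 1))),
      (walkOfFn G f n h).length = n := by
  intro n
  induction n generalizing f with
  | zero => intro h; rfl
  | succ n ih =>
    intro h
    simp only [walkOfFn, Walk.length_cons]
    rw [ih]

lemma support_walkOfFn (f : ℕ → V) :
    ∀ (n : ℕ) (h : ∀ i, i < n → G.Adj (f i) (f (i + 1))),
      (walkOfFn G f n h).support = (List.range (n + 1)).map f := by
  intro n
  induction n generalizing f with
  | zero => intro h; simp [walkOfFn, List.range_succ]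
  | succ n ih =>
    intro h
    simp only [walkOfFn, Walk.support_cons]
    rw [ih]
    conv_rhs => rw [List.range_succ_eq_map, List.map_cons, List.map_map]
    simp [Function.comp_def]

lemma edges_walkOfFn (f : ℕ → V) :
    ∀ (n : ℕ) (h : ∀ i, i < n → G.Adj (f i) (f (i + 1))),
      (walkOfFn G f n h).edges = (List.range n).map (fun i => s(f i, f (i + 1))) := by
  intro n
  induction n generalizing f with
  | zero => intro h; simp [walkOfFn]
  | succ n ih =>
    intro h
    simp only [walkOfFn, Walk.edges_cons]
    rw [ih]
    conv_rhs => rw [List.range_succ_eq_map, List.map_cons, List.map_map]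
    simp [Function.comp_def]

lemma support_eq_map_getVert {u v : V} (p : G.Walk u v) :
    p.support = (List.range (p.length + 1)).map p.getVert := by
  induction p with
  | nil => simp [Walk.getVert]
  | cons h q ih =>
    rw [Walk.support_cons, Walk.length_cons, ih]
    conv_rhs => rw [List.range_succ_eq_map, List.map_cons, List.map_map]
    simp [Function.comp_def, Walk.getVert_cons_succ]

lemma getVert_injOn_of_isPath {u v : V} {p : G.Walk u v} (hp : p.IsPath) {i j : ℕ}
    (hi : i ≤ p.length) (hj : j ≤ p.length) (hij : p.getVert i = p.getVert j) : i = j := by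
  have hnd := hp.support_nodup
  rw [support_eq_map_getVert] at hnd
  exact List.inj_on_of_nodup_map hnd (List.mem_range.mpr (by omega))
    (List.mem_range.mpr (by omega)) hij

end DiracAux

open DiracAux SimpleGraph in
/-- Dirac's theorem: if `G` is a simple graph with `n ≥ 3` vertices and minimum
degree `δ(G) ≥ n / 2`, then `G` is Hamiltonian. -/
theorem dirac_theorem {V : Type*} [Fintype V] [DecidableEq V]
    (G : SimpleGraph V) [DecidableRel G.Adj]
    (hn : 3 ≤ Fintype.card V)
    (h : (Fintype.card V : ℚ) / 2 ≤ (G.minDegree : ℚ)) :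
    G.IsHamiltonian := by
  classical
  set n := Fintype.card V with hncard
  -- minimum degree in ℕ
  have hdeg : ∀ v : V, n ≤ 2 * G.degree v := by
    intro v
    have h1 : (n : ℚ) ≤ 2 * (G.minDegree : ℚ) := by linarith
    have h2 : n ≤ 2 * G.minDegree := by exact_mod_cast h1
    have h3 := G.minDegree_le_degree v
    omega
  have hne : Nonempty V := Fintype.card_pos_iff.mp (by omega)
  -- diameter 2 property
  have hdiam : ∀ u v : V, u ≠ v → ¬ G.Adj u v → ∃ z, G.Adj u z ∧ G.Adj v z := by
    intro u v huv hadj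
    by_contra hz
    push_neg at hz
    have hdisj : Disjoint (G.neighborFinset u) (G.neighborFinset v) := by
      rw [Finset.disjoint_left]
      intro x hx hx'
      rw [SimpleGraph.mem_neighborFinset] at hx hx'
      exact hz x hx hx'
    have hsub : G.neighborFinset u ∪ G.neighborFinset v ⊆ (Finset.univ.erase u).erase v := by
      intro x hx
      rw [Finset.mem_union] at hx
      have hxu : x ≠ u := by
        rintro rfl
        rcases hx with hx | hx <;> rw [SimpleGraph.mem_neighborFinset] at hx
        · exact G.loopless.irrefl _ hx
        · exact hadj hx.symm
      have hxv : x ≠ v := by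
        rintro rfl
        rcases hx with hx | hx <;> rw [SimpleGraph.mem_neighborFinset] at hx
        · exact hadj hx
        · exact G.loopless.irrefl _ hx
      exact Finset.mem_erase.mpr ⟨hxv, Finset.mem_erase.mpr ⟨hxu, Finset.mem_univ x⟩⟩
    have hcard1 : (G.neighborFinset u ∪ G.neighborFinset v).card ≤ n - 2 := by
      have := Finset.card_le_card hsub
      rw [Finset.card_erase_of_mem (Finset.mem_erase.mpr ⟨huv.symm, Finset.mem_univ v⟩),
        Finset.card_erase_of_mem (Finset.mem_univ u), Finset.card_univ] at this
      omega
    have hcard2 : (G.neighborFinset u ∪ G.neighborFinset v).card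
        = G.degree u + G.degree v := by
      rw [Finset.card_union_of_disjoint hdisj, SimpleGraph.card_neighborFinset_eq_degree,
        SimpleGraph.card_neighborFinset_eq_degree]
    have h1 := hdeg u
    have h2 := hdeg v
    omega
  -- a path of maximal length
  set P : ℕ → Prop := fun m => ∃ (x y : V) (p : G.Walk x y), p.IsPath ∧ p.length = m with hP
  have hP0 : P 0 := by
    obtain ⟨x⟩ := hne
    exact ⟨x, x, Walk.nil, by simp, rfl⟩
  set M := Nat.findGreatest P n with hM
  have hPM : P M := Nat.findGreatest_spec (Nat.zero_le n) hP0
  have hmax : ∀ (x y : V) (q : G.Walk x y), q.IsPath → q.length ≤ M := by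
    intro x y q hq
    exact Nat.le_findGreatest (le_of_lt hq.length_lt) ⟨x, y, q, hq, rfl⟩
  obtain ⟨a, b, p, hp, hlen⟩ := hPM
  set k := p.length with hk
  have hkn : k < n := hp.length_lt
  -- all neighbors of the endpoints lie on the path
  have hNa : ∀ x, G.Adj a x → x ∈ p.support := by
    intro x hx
    by_contra hxs
    have hpath : (Walk.cons hx.symm p).IsPath := by
      rw [Walk.isPath_def, Walk.support_cons]
      exact List.nodup_cons.mpr ⟨hxs, hp.support_nodup⟩
    have := hmax _ _ _ hpath
    rw [Walk.length_cons] at this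
    omega
  have hNb : ∀ x, G.Adj b x → x ∈ p.support := by
    intro x hx
    by_contra hxs
    have hxs' : x ∉ p.reverse.support := by rwa [Walk.support_reverse, List.mem_reverse]
    have hpath : (Walk.cons hx.symm p.reverse).IsPath := by
      rw [Walk.isPath_def, Walk.support_cons]
      refine List.nodup_cons.mpr ⟨hxs', ?_⟩
      rw [Walk.support_reverse, List.nodup_reverse]
      exact hp.support_nodup
    have := hmax _ _ _ hpath
    rw [Walk.length_cons, Walk.length_reverse] at this
    omega
  -- index function
  set idx : V → ℕ := fun x =>
    if hx : x ∈ p.support then Classical.choose (Walk.mem_support_iff_exists_getVert.mp hx)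
    else 0 with hidx
  have idx_spec : ∀ x, x ∈ p.support → p.getVert (idx x) = x ∧ idx x ≤ k := by
    intro x hx
    simp only [hidx, dif_pos hx]
    exact Classical.choose_spec (Walk.mem_support_iff_exists_getVert.mp hx)
  -- the two finsets of indices
  set A := (Finset.range k).filter (fun i => G.Adj a (p.getVert (i + 1))) with hA
  set B := (Finset.range k).filter (fun i => G.Adj b (p.getVert i)) with hB
  have idx_ne_zero : ∀ x, G.Adj a x → idx x ≠ 0 := by
    intro x hx h0
    obtain ⟨hgv, _⟩ := idx_spec x (hNa x hx)
    rw [h0, Walk.getVert_zero] at hgv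
    exact G.loopless.irrefl a (hgv ▸ hx)
  have idx_ne_k : ∀ x, G.Adj b x → idx x ≠ k := by
    intro x hx h0
    obtain ⟨hgv, _⟩ := idx_spec x (hNb x hx)
    rw [h0, hk, Walk.getVert_length] at hgv
    exact G.loopless.irrefl b (hgv ▸ hx)
  have hAcard : G.degree a ≤ A.card := by
    rw [← SimpleGraph.card_neighborFinset_eq_degree]
    apply Finset.card_le_card_of_injOn (fun x => idx x - 1)
    · intro x hx
      rw [Finset.mem_coe, SimpleGraph.mem_neighborFinset] at hx
      obtain ⟨hgv, hle⟩ := idx_spec x (hNa x hx)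
      have h0 := idx_ne_zero x hx
      rw [hA, Finset.mem_coe, Finset.mem_filter, Finset.mem_range]; beta_reduce
      refine ⟨by omega, ?_⟩
      have : idx x - 1 + 1 = idx x := by omega
      rw [this, hgv]
      exact hx
    · intro x hx y hy hxy
      rw [Finset.mem_coe, SimpleGraph.mem_neighborFinset] at hx hy
      obtain ⟨hgx, _⟩ := idx_spec x (hNa x hx)
      obtain ⟨hgy, _⟩ := idx_spec y (hNa y hy)
      have h0x := idx_ne_zero x hx
      have h0y := idx_ne_zero y hy
      simp only at hxy
      have : idx x = idx y := by omega
      rw [← hgx, ← hgy, this]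
  have hBcard : G.degree b ≤ B.card := by
    rw [← SimpleGraph.card_neighborFinset_eq_degree]
    apply Finset.card_le_card_of_injOn (fun x => idx x)
    · intro x hx
      rw [Finset.mem_coe, SimpleGraph.mem_neighborFinset] at hx
      obtain ⟨hgv, hle⟩ := idx_spec x (hNb x hx)
      have h0 := idx_ne_k x hx
      rw [hB, Finset.mem_coe, Finset.mem_filter, Finset.mem_range]; beta_reduce
      refine ⟨by omega, ?_⟩
      rw [hgv]
      exact hx
    · intro x hx y hy hxy
      rw [Finset.mem_coe, SimpleGraph.mem_neighborFinset] at hx hy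
      obtain ⟨hgx, _⟩ := idx_spec x (hNb x hx)
      obtain ⟨hgy, _⟩ := idx_spec y (hNb y hy)
      rw [← hgx, ← hgy]
      simp only at hxy
      rw [hxy]
  have hk2 : 2 ≤ k := by
    have h1 : A.card ≤ k := by
      calc A.card ≤ (Finset.range k).card := Finset.card_le_card (Finset.filter_subset _ _)
        _ = k := Finset.card_range k
    have h2 := hdeg a
    omega
  -- crossing indices
  have hcross : (A ∩ B).Nonempty := by
    have h1 := Finset.card_union_add_card_inter A B
    have h2 : (A ∪ B).card ≤ k := by
      calc (A ∪ B).card ≤ (Finset.range k).card := by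
            apply Finset.card_le_card
            rw [Finset.union_subset_iff]
            exact ⟨Finset.filter_subset _ _, Finset.filter_subset _ _⟩
        _ = k := Finset.card_range k
    have h3 := hdeg a
    have h4 := hdeg b
    rw [← Finset.card_pos]
    omega
  obtain ⟨i, hi⟩ := hcross
  rw [Finset.mem_inter, hA, hB, Finset.mem_filter, Finset.mem_filter, Finset.mem_range] at hi
  obtain ⟨⟨hik, hai⟩, _, hbi⟩ := hi
  -- construct the cycle through all vertices of p
  set g : ℕ → V := fun t =>
    if t ≤ k - 1 - i then p.getVert (i + 1 + t)
    else if t ≤ k then p.getVert (k - t) else a with hg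
  have expand : ∀ t, t ≤ k → g t = p.getVert (if t ≤ k - 1 - i then i + 1 + t else k - t) := by
    intro t ht
    by_cases h1 : t ≤ k - 1 - i
    · simp only [hg, if_pos h1]
    · simp only [hg, if_neg h1, if_pos ht]
  have hσle : ∀ t, t ≤ k → (if t ≤ k - 1 - i then i + 1 + t else k - t) ≤ k := by
    intro t ht
    split_ifs <;> omega
  have hginj : ∀ s, s ≤ k → ∀ t, t ≤ k → g s = g t → s = t := by
    intro s hs t ht hst
    rw [expand s hs, expand t ht] at hst
    have := getVert_injOn_of_isPath hp (by rw [← hk]; exact hσle s hs)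
      (by rw [← hk]; exact hσle t ht) hst
    split_ifs at this <;> omega
  have hgadj : ∀ t, t < k → G.Adj (g t) (g (t + 1)) := by
    intro t ht
    rcases lt_trichotomy t (k - 1 - i) with h1 | h1 | h1
    · rw [expand t (by omega), expand (t + 1) (by omega), if_pos (by omega), if_pos (by omega)]
      have e : i + 1 + (t + 1) = (i + 1 + t) + 1 := by omega
      rw [e]
      exact p.adj_getVert_succ (by omega)
    · rw [expand t (by omega), expand (t + 1) (by omega), if_pos (by omega), if_neg (by omega)]
      have e1 : i + 1 + t = k := by omega
      have e2 : k - (t + 1) = i := by omega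
      rw [e1, e2, hk, Walk.getVert_length]
      exact hbi
    · rw [expand t (by omega), expand (t + 1) (by omega), if_neg (by omega), if_neg (by omega)]
      have e : k - t = (k - (t + 1)) + 1 := by omega
      rw [e]
      exact (p.adj_getVert_succ (by omega)).symm
  set q := walkOfFn G g k hgadj with hq
  have hg0 : g 0 = p.getVert (i + 1) := by
    rw [expand 0 (by omega), if_pos (by omega)]
  have hgk : g k = a := by
    rw [expand k le_rfl, if_neg (by omega)]
    rw [Nat.sub_self, Walk.getVert_zero]
  set q' := q.copy hg0 hgk with hq'
  set c : G.Walk a a := Walk.cons hai q' with hc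
  have hqsupp : q.support = (List.range (k + 1)).map g := support_walkOfFn g k hgadj
  have hq'path : q'.IsPath := by
    rw [hq', Walk.isPath_copy, Walk.isPath_def, hqsupp]
    apply List.Nodup.map_on _ List.nodup_range
    intro x hx y hy hxy
    rw [List.mem_range] at hx hy
    exact hginj x (by omega) y (by omega) hxy
  have hnotmem : s(a, p.getVert (i + 1)) ∉ q'.edges := by
    rw [hq', Walk.edges_copy, edges_walkOfFn]
    rw [List.mem_map]
    rintro ⟨t, ht, hst⟩
    rw [List.mem_range] at ht
    rw [Sym2.eq_iff] at hst
    rcases hst with ⟨h1, h2⟩ | ⟨h1, h2⟩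
    · -- g t = a = getVert 0
      rw [expand t (by omega)] at h1
      have h0 : p.getVert (if t ≤ k - 1 - i then i + 1 + t else k - t) = p.getVert 0 := by
        rw [h1, Walk.getVert_zero]
      have := getVert_injOn_of_isPath hp (by rw [← hk]; exact hσle t (by omega))
        (by omega) h0
      split_ifs at this <;> omega
    · -- g t = getVert (i+1), g (t+1) = a
      rw [expand t (by omega)] at h1
      have e1 := getVert_injOn_of_isPath hp (by rw [← hk]; exact hσle t (by omega))
        (by rw [← hk]; omega) h1
      rw [expand (t + 1) (by omega)] at h2
      have h0 : p.getVert (if t + 1 ≤ k - 1 - i then i + 1 + (t + 1) else k - (t + 1))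
          = p.getVert 0 := by rw [h2, Walk.getVert_zero]
      have e2 := getVert_injOn_of_isPath hp (by rw [← hk]; exact hσle (t + 1) (by omega))
        (by omega) h0
      split_ifs at e1 <;> split_ifs at e2 <;> omega
  have hccycle : c.IsCycle := (Walk.cons_isCycle_iff q' hai).mpr ⟨hq'path, hnotmem⟩
  have hcsupp : c.support = a :: (List.range (k + 1)).map g := by
    rw [hc, Walk.support_cons, hq', Walk.support_copy, hqsupp]
  have hcov : ∀ x, x ∈ p.support → x ∈ c.support := by
    intro x hx
    obtain ⟨j, hj, hjk⟩ := Walk.mem_support_iff_exists_getVert.mp hx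
    rw [← hk] at hjk
    rw [hcsupp]
    apply List.mem_cons_of_mem
    rw [List.mem_map]
    by_cases hji : j ≤ i
    · refine ⟨k - j, List.mem_range.mpr (by omega), ?_⟩
      rw [expand (k - j) (by omega), if_neg (by omega)]
      have : k - (k - j) = j := by omega
      rw [this, hj]
    · refine ⟨j - i - 1, List.mem_range.mpr (by omega), ?_⟩
      rw [expand (j - i - 1) (by omega), if_pos (by omega)]
      have : i + 1 + (j - i - 1) = j := by omega
      rw [this, hj]
  have hclen : c.length = k + 1 := by
    rw [hc, Walk.length_cons, hq', Walk.length_copy, hq, length_walkOfFn]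
  by_cases hall : ∀ x, x ∈ c.support
  · -- the cycle is Hamiltonian
    intro _
    refine ⟨a, c, hccycle, ?_⟩
    have hnil : ¬ c.Nil := hccycle.not_nil
    have htp : c.tail.IsPath := by
      rw [Walk.isPath_def, Walk.support_tail_of_not_nil c hnil]
      exact hccycle.support_nodup
    apply htp.isHamiltonian_of_mem
    intro w
    have hw := hall w
    rw [Walk.support_eq_cons] at hw
    rw [Walk.support_tail_of_not_nil c hnil]
    rcases List.mem_cons.mp hw with rfl | hw'
    · have := Walk.end_mem_support c.tail
      rwa [Walk.support_tail_of_not_nil c hnil] at this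
    · exact hw'
  · exfalso
    push_neg at hall
    obtain ⟨w, hw⟩ := hall
    have hamem : a ∈ c.support := Walk.start_mem_support c
    obtain ⟨w', x, hw', hx, hadj⟩ :
        ∃ w' x, w' ∉ c.support ∧ x ∈ c.support ∧ G.Adj w' x := by
      by_cases hwa : G.Adj w a
      · exact ⟨w, a, hw, hamem, hwa⟩
      · have hwna : w ≠ a := fun hh => hw (hh ▸ hamem)
        obtain ⟨z, hz1, hz2⟩ := hdiam w a hwna hwa
        by_cases hzc : z ∈ c.support
        · exact ⟨w, z, hw, hzc, hz1⟩
        · exact ⟨z, a, hzc, hamem, hz2.symm⟩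
    set c' := c.rotate x hx with hc'
    have hc'cyc : c'.IsCycle := hccycle.rotate (u := x) hx
    have hc'nil : ¬ c'.Nil := hc'cyc.not_nil
    have hc'len : c'.length = k + 1 := by
      have h1 := Walk.take_spec c hx
      have h2 : (c.takeUntil x hx).length + (c.dropUntil x hx).length = c.length := by
        rw [← Walk.length_append, h1]
      rw [hc']
      unfold Walk.rotate
      rw [Walk.length_append]
      omega
    have hsupp' : ∀ y, y ∈ c'.support → y ∈ c.support := by
      intro y hy
      rw [Walk.support_eq_cons] at hy
      rcases List.mem_cons.mp hy with rfl | hy'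
      · exact hx
      · have hrot := Walk.support_rotate c x hx
        have hyc : y ∈ c.support.tail := hrot.mem_iff.mp hy'
        exact List.mem_of_mem_tail hyc
    set d := Walk.cons hadj c'.tail.reverse with hd
    have hdpath : d.IsPath := by
      rw [hd, Walk.isPath_def, Walk.support_cons, Walk.support_reverse]
      refine List.nodup_cons.mpr ⟨?_, ?_⟩
      · rw [List.mem_reverse]
        intro hmem
        rw [Walk.support_tail_of_not_nil c' hc'nil] at hmem
        exact hw' (hsupp' w' (List.mem_of_mem_tail hmem))
      · rw [List.nodup_reverse, Walk.support_tail_of_not_nil c' hc'nil]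
        exact hc'cyc.support_nodup
    have hdlen : d.length = k + 1 := by
      rw [hd, Walk.length_cons, Walk.length_reverse]
      have := Walk.length_tail_add_one hc'nil
      omega
    have := hmax _ _ d hdpath
    omega
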